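/- For n ∈ ℕ, J_{1,n} ∈ {J_X, J_Y, J_D}^n (with J_D = [[1,-1],[1,1]]) and g = χ_{[-1/2,1/2)²} the indicator of the half-open unit square, the recursively defined functions satisfy B_{J_{l+1,n}} = χ_{[-1/2,1/2)²} for all l = 0,…,n; i.e. (Σ_{z ∈ ℤ²} χ_{[-1/2,1/2)²}(x + J^T z)) · χ_{[-1/2,1/2)²}(J^{-T} x) = χ_{[-1/2,1/2)²}(x) for each J ∈ {J_X, J_Y, J_D} and x ∈ ℝ². -/

import Mathlib

open Matrix

/-- The operator `Φ_J(f₁,f₂) = (Σ_{z ∈ ℤ^d} f₁(· + Jᵀz)) · f₂(J⁻ᵀ ·)`. -/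
noncomputable def Phi {d : ℕ} (J : Matrix (Fin d) (Fin d) ℤ)
    (f₁ f₂ : (Fin d → ℝ) → ℝ) : (Fin d → ℝ) → ℝ :=
  fun x => (∑' z : Fin d → ℤ, f₁ (x + fun i => ((Jᵀ.mulVec z) i : ℝ))) *
    f₂ (((J.map (Int.cast : ℤ → ℝ))ᵀ)⁻¹.mulVec x)

/-- The recursively defined functions `B_{J_{l,n}}` for the list `[J_l, …, J_n]`. -/
noncomputable def BofList {d : ℕ} (g : (Fin d → ℝ) → ℝ) :
    List (Matrix (Fin d) (Fin d) ℤ) → ((Fin d → ℝ) → ℝ)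
  | [] => g
  | Jl :: rest => Phi Jl g (BofList g rest)

/-- The indicator function of the half-open square `Q₂ = [-1/2,1/2)²`. -/
noncomputable def chiQ : (Fin 2 → ℝ) → ℝ :=
  fun x => if ∀ i, -(1 / 2) ≤ x i ∧ x i < 1 / 2 then 1 else 0

lemma chiQ_pos {y : Fin 2 → ℝ} (h : ∀ i, -(1/2) ≤ y i ∧ y i < 1/2) : chiQ y = 1 :=
  if_pos h

lemma chiQ_neg {y : Fin 2 → ℝ} (h : ¬ ∀ i, -(1/2) ≤ y i ∧ y i < 1/2) : chiQ y = 0 :=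
  if_neg h

lemma key (J : Matrix (Fin 2) (Fin 2) ℤ) (B : Matrix (Fin 2) (Fin 2) ℝ)
    (hBJ : B * (J.map (Int.cast : ℤ → ℝ))ᵀ = 1)
    (hQ : ∀ y : Fin 2 → ℝ, (∀ i, -(1/2) ≤ y i ∧ y i < 1/2) →
      ∀ i, -(1/2) ≤ B.mulVec y i ∧ B.mulVec y i < 1/2)
    (x : Fin 2 → ℝ) :
    (∑' z : Fin 2 → ℤ, chiQ (x + fun i => ((Jᵀ.mulVec z) i : ℝ))) *
          chiQ (((J.map (Int.cast : ℤ → ℝ))ᵀ)⁻¹.mulVec x) = chiQ x := by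
  have hBinv : ((J.map (Int.cast : ℤ → ℝ))ᵀ)⁻¹ = B := by
    exact Matrix.inv_eq_left_inv hBJ
  have hcast : ∀ z : Fin 2 → ℤ, (fun i => ((Jᵀ.mulVec z) i : ℝ)) =
      (J.map (Int.cast : ℤ → ℝ))ᵀ.mulVec (fun i => (z i : ℝ)) := by
    intro z
    funext i
    simp only [Matrix.mulVec, dotProduct, Fin.sum_univ_two, Matrix.transpose_apply,
      Matrix.map_apply]
    push_cast
    ring
  have hBz : ∀ z : Fin 2 → ℤ,
      B.mulVec ((J.map (Int.cast : ℤ → ℝ))ᵀ.mulVec (fun i => (z i : ℝ))) =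
        (fun i => (z i : ℝ)) := by
    intro z
    rw [Matrix.mulVec_mulVec, hBJ, Matrix.one_mulVec]
  set u := B.mulVec x with hu_def
  have hBxz : ∀ z : Fin 2 → ℤ,
      B.mulVec (x + fun i => ((Jᵀ.mulVec z) i : ℝ)) = u + fun i => (z i : ℝ) := by
    intro z
    rw [hcast z, Matrix.mulVec_add, hBz]
  have hz0 : ∀ z : Fin 2 → ℤ, (∀ i, -(1/2) ≤ u i ∧ u i < 1/2) →
      (∀ i, -(1/2) ≤ (u + fun i => (z i : ℝ)) i ∧ (u + fun i => (z i : ℝ)) i < 1/2) →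
      z = 0 := by
    intro z hu huz
    funext i
    obtain ⟨h1, h2⟩ := hu i
    obtain ⟨h3, h4⟩ := huz i
    simp only [Pi.add_apply] at h3 h4
    have hlt : (z i : ℝ) < 1 := by linarith
    have hgt : (-1 : ℝ) < (z i : ℝ) := by linarith
    have hlt' : z i < 1 := by exact_mod_cast hlt
    have hgt' : (-1 : ℤ) < z i := by exact_mod_cast hgt
    simp only [Pi.zero_apply]
    omega
  rw [hBinv, ← hu_def]
  by_cases hx : ∀ i, -(1/2) ≤ x i ∧ x i < 1/2
  · have hu : ∀ i, -(1/2) ≤ u i ∧ u i < 1/2 := hQ x hx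
    have h1 : (∑' z : Fin 2 → ℤ, chiQ (x + fun i => ((Jᵀ.mulVec z) i : ℝ))) = 1 := by
      rw [tsum_eq_single 0]
      · simp only [Matrix.mulVec_zero, Pi.zero_apply, Int.cast_zero]
        have : (x + fun _ : Fin 2 => (0 : ℝ)) = x := by funext i; simp
        rw [this]
        exact chiQ_pos hx
      · intro z hz
        apply chiQ_neg
        intro hmem
        have := hQ _ hmem
        rw [hBxz z] at this
        exact hz (hz0 z hu this)
    rw [h1, chiQ_pos hu, one_mul, chiQ_pos hx]
  · rw [chiQ_neg hx]
    by_cases hu : ∀ i, -(1/2) ≤ u i ∧ u i < 1/2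
    · have h1 : (∑' z : Fin 2 → ℤ, chiQ (x + fun i => ((Jᵀ.mulVec z) i : ℝ))) = 0 := by
        have hall : ∀ z : Fin 2 → ℤ, chiQ (x + fun i => ((Jᵀ.mulVec z) i : ℝ)) = 0 := by
          intro z
          apply chiQ_neg
          intro hmem
          have h2 := hQ _ hmem
          rw [hBxz z] at h2
          have hz := hz0 z hu h2
          subst hz
          apply hx
          intro i
          have := hmem i
          simpa using this
        rw [tsum_congr hall, tsum_zero]
      rw [h1, zero_mul]
    · rw [chiQ_neg hu, mul_zero]

/-- Lemma 4.4: for `J_{1,n} ∈ {J_X, J_Y, J_D}^n` and `g = χ_{[-1/2,1/2)²}`, the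
recursively defined functions satisfy `B_{J_{l+1,n}} = χ_{[-1/2,1/2)²}`; pointwise,
`(Σ_{z ∈ ℤ²} χ(x+Jᵀz)) · χ(J⁻ᵀx) = χ(x)` for each `J ∈ {J_X, J_Y, J_D}`. -/
theorem dirichlet_case_BofList_eq_indicator :
    (∀ J ∈ ({!![2, 0; 0, 1], !![1, 0; 0, 2], !![1, -1; 1, 1]} :
        Set (Matrix (Fin 2) (Fin 2) ℤ)),
      ∀ x : Fin 2 → ℝ,
        (∑' z : Fin 2 → ℤ, chiQ (x + fun i => ((Jᵀ.mulVec z) i : ℝ))) *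
          chiQ (((J.map (Int.cast : ℤ → ℝ))ᵀ)⁻¹.mulVec x) = chiQ x) ∧
    (∀ L : List (Matrix (Fin 2) (Fin 2) ℤ),
      (∀ A ∈ L, A ∈ ({!![2, 0; 0, 1], !![1, 0; 0, 2], !![1, -1; 1, 1]} :
        Set (Matrix (Fin 2) (Fin 2) ℤ))) →
      BofList chiQ L = chiQ) := by
  have main : ∀ J ∈ ({!![2, 0; 0, 1], !![1, 0; 0, 2], !![1, -1; 1, 1]} :
        Set (Matrix (Fin 2) (Fin 2) ℤ)),
      ∀ x : Fin 2 → ℝ,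
        (∑' z : Fin 2 → ℤ, chiQ (x + fun i => ((Jᵀ.mulVec z) i : ℝ))) *
          chiQ (((J.map (Int.cast : ℤ → ℝ))ᵀ)⁻¹.mulVec x) = chiQ x := by
    intro J hJ
    simp only [Set.mem_insert_iff, Set.mem_singleton_iff] at hJ
    rcases hJ with rfl | rfl | rfl
    · apply key _ !![1/2, 0; 0, 1]
      · ext i j
        fin_cases i <;> fin_cases j <;>
          simp [Matrix.mul_apply, Fin.sum_univ_two, Matrix.map_apply, Matrix.one_apply] <;>
          norm_num
      · intro y hy i
        have h0 := hy 0
        have h1 := hy 1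
        fin_cases i <;>
          simp [Matrix.mulVec, dotProduct, Fin.sum_univ_two, Fin.mk_zero, Fin.mk_one] <;>
          constructor <;> linarith [h0.1, h0.2, h1.1, h1.2]
    · apply key _ !![1, 0; 0, 1/2]
      · ext i j
        fin_cases i <;> fin_cases j <;>
          simp [Matrix.mul_apply, Fin.sum_univ_two, Matrix.map_apply, Matrix.one_apply] <;>
          norm_num
      · intro y hy i
        have h0 := hy 0
        have h1 := hy 1
        fin_cases i <;>
          simp [Matrix.mulVec, dotProduct, Fin.sum_univ_two, Fin.mk_zero, Fin.mk_one] <;>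
          constructor <;> linarith [h0.1, h0.2, h1.1, h1.2]
    · apply key _ !![1/2, -(1/2); 1/2, 1/2]
      · ext i j
        fin_cases i <;> fin_cases j <;>
          simp [Matrix.mul_apply, Fin.sum_univ_two, Matrix.map_apply, Matrix.one_apply] <;>
          norm_num
      · intro y hy i
        have h0 := hy 0
        have h1 := hy 1
        fin_cases i <;>
          simp [Matrix.mulVec, dotProduct, Fin.sum_univ_two, Fin.mk_zero, Fin.mk_one] <;>
          constructor <;> linarith [h0.1, h0.2, h1.1, h1.2]
  refine ⟨main, ?_⟩
  intro L hL
  induction L with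
  | nil => rfl
  | cons J rest ih =>
    have hJ := hL J List.mem_cons_self
    have hrest := ih (fun A hA => hL A (List.mem_cons_of_mem J hA))
    show Phi J chiQ (BofList chiQ rest) = chiQ
    rw [hrest]
    funext x
    exact main J hJ x
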